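/- Let W(n) be the number of total preorders (reflexive, transitive, total binary relations) on Fin n. Then the exponential generating function of W is 1/(2 - e^x): as formal power series over ℚ, (2 - exp) · \sum_{n\ge 0} (W(n)/n!) X^n = 1, where exp denotes the formal exponential series. -/

import Mathlib

/-- `W n` is the number of total preorders (preferential arrangements / weak orders),
i.e. reflexive, transitive and total binary relations, on `Fin n`. -/
noncomputable def W (n : ℕ) : ℕ :=
  Nat.card {r : Fin n → Fin n → Prop //
    Reflexive r ∧ Transitive r ∧ ∀ x y : Fin n, r x y ∨ r y x}

def TP (α : Type*) : Type _ :=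
  {r : α → α → Prop // Reflexive r ∧ Transitive r ∧ ∀ x y : α, r x y ∨ r y x}

instance (α : Type*) [Finite α] : Finite (TP α) := by
  unfold TP; infer_instance

/-- transport total preorders along an equiv -/
def TP.congr {α β : Type*} (e : α ≃ β) : TP α ≃ TP β where
  toFun r := ⟨fun x y => r.1 (e.symm x) (e.symm y),
    fun x => r.2.1 _, fun _ _ _ h h' => r.2.2.1 h h', fun x y => r.2.2.2 _ _⟩
  invFun r := ⟨fun x y => r.1 (e x) (e y),
    fun x => r.2.1 _, fun _ _ _ h h' => r.2.2.1 h h', fun x y => r.2.2.2 _ _⟩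
  left_inv r := by apply Subtype.ext; funext x y; simp
  right_inv r := by apply Subtype.ext; funext x y; simp

theorem card_TP (α : Type*) [Fintype α] : Nat.card (TP α) = W (Fintype.card α) :=
  Nat.card_congr (TP.congr (Fintype.equivFin α))

theorem W_zero : W 0 = 1 := by
  have : Nonempty (TP (Fin 0)) := ⟨⟨fun _ _ => True, fun _ => trivial, fun _ _ _ _ _ => trivial,
    fun x _ => Or.inl trivial⟩⟩
  have h : Subsingleton (TP (Fin 0)) := ⟨fun a b => by
    apply Subtype.ext; funext x; exact x.elim0⟩
  exact Nat.card_eq_one_iff_unique.mpr ⟨h, this⟩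

open Finset in
theorem exists_top_finset {α : Type*} (r : α → α → Prop)
    (htrans : Transitive r) (htot : ∀ x y : α, r x y ∨ r y x)
    {s : Finset α} (hs : s.Nonempty) : ∃ m ∈ s, ∀ y ∈ s, r y m := by
  induction hs using Finset.Nonempty.cons_induction with
  | singleton a =>
      refine ⟨a, mem_singleton_self a, fun y hy => ?_⟩
      rw [mem_singleton] at hy; subst hy
      rcases htot y y with h | h <;> exact h
  | cons a s ha hs ih =>
      obtain ⟨m, hm, hmax⟩ := ih
      rcases htot a m with h | h
      · refine ⟨m, mem_cons_of_mem hm, fun y hy => ?_⟩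
        rcases mem_cons.mp hy with rfl | hy
        · exact h
        · exact hmax y hy
      · refine ⟨a, mem_cons_self a s, fun y hy => ?_⟩
        rcases mem_cons.mp hy with rfl | hy
        · rcases htot y y with h' | h' <;> exact h'
        · exact htrans (hmax y hy) h

section Decomp

variable {α : Type*} [Fintype α] [DecidableEq α] [Nonempty α]

open Finset Classical in
/-- the set of top elements of a total preorder -/
noncomputable def topSet (r : TP α) : Finset α :=
  Finset.univ.filter (fun x => ∀ y, r.1 y x)

theorem mem_topSet {r : TP α} {x : α} : x ∈ topSet r ↔ ∀ y, r.1 y x := by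
  classical
  simp [topSet]

theorem topSet_nonempty (r : TP α) : (topSet r).Nonempty := by
  obtain ⟨m, _, hm⟩ := exists_top_finset r.1 r.2.2.1 r.2.2.2 (Finset.univ_nonempty (α := α))
  exact ⟨m, mem_topSet.mpr fun y => hm y (Finset.mem_univ y)⟩

/-- glue a total preorder on the complement of `S` with `S` as top block -/
noncomputable def glue (S : {S : Finset α // S.Nonempty}) (r : TP {x : α // x ∉ S.1}) : TP α := by
  refine ⟨fun x y => y ∈ S.1 ∨ ∃ (hx : x ∉ S.1) (hy : y ∉ S.1), r.1 ⟨x, hx⟩ ⟨y, hy⟩, ?_, ?_, ?_⟩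
  · intro x
    by_cases hx : x ∈ S.1
    · exact Or.inl hx
    · exact Or.inr ⟨hx, hx, r.2.1 _⟩
  · rintro x y z hxy (hz | ⟨hy, hz, hyz⟩)
    · exact Or.inl hz
    · rcases hxy with hy' | ⟨hx, hy', hxy⟩
      · exact absurd hy' hy
      · exact Or.inr ⟨hx, hz, r.2.2.1 hxy hyz⟩
  · intro x y
    by_cases hy : y ∈ S.1
    · exact Or.inl (Or.inl hy)
    by_cases hx : x ∈ S.1
    · exact Or.inr (Or.inl hx)
    rcases r.2.2.2 ⟨x, hx⟩ ⟨y, hy⟩ with h | h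
    · exact Or.inl (Or.inr ⟨hx, hy, h⟩)
    · exact Or.inr (Or.inr ⟨hy, hx, h⟩)

theorem topSet_glue (S : {S : Finset α // S.Nonempty}) (r : TP {x : α // x ∉ S.1}) :
    topSet (glue S r) = S.1 := by
  ext x
  rw [mem_topSet]
  constructor
  · intro h
    obtain ⟨a, ha⟩ := S.2
    rcases h a with hx | ⟨ha', _, _⟩
    · exact hx
    · exact absurd ha ha'
  · intro hx y
    exact Or.inl hx

theorem glue_restrict (r : TP α) :
    glue ⟨topSet r, topSet_nonempty r⟩
      ⟨fun x y => r.1 x.1 y.1, fun x => r.2.1 _, fun _ _ _ h h' => r.2.2.1 h h',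
        fun x y => r.2.2.2 _ _⟩ = r := by
  apply Subtype.ext
  funext x y
  apply propext
  constructor
  · rintro (hy | ⟨hx, hy, hxy⟩)
    · exact mem_topSet.mp hy x
    · exact hxy
  · intro hxy
    by_cases hy : y ∈ topSet r
    · exact Or.inl hy
    · refine Or.inr ⟨?_, hy, hxy⟩
      intro hx
      exact hy (mem_topSet.mpr fun z => r.2.2.1 (mem_topSet.mp hx z) hxy)

theorem glue_apply_not_mem {S : {S : Finset α // S.Nonempty}} {r : TP {x : α // x ∉ S.1}}
    {x y : α} (hx : x ∉ S.1) (hy : y ∉ S.1) :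
    (glue S r).1 x y ↔ r.1 ⟨x, hx⟩ ⟨y, hy⟩ := by
  constructor
  · rintro (h | ⟨hx', hy', h⟩)
    · exact absurd h hy
    · exact h
  · intro h
    exact Or.inr ⟨hx, hy, h⟩

/-- decomposition of a total preorder into its top block and the rest -/
noncomputable def decompEquiv :
    (Σ S : {S : Finset α // S.Nonempty}, TP {x : α // x ∉ S.1}) ≃ TP α := by
  refine Equiv.ofBijective (fun p => glue p.1 p.2) ⟨?_, ?_⟩
  · rintro ⟨⟨S, hS⟩, r⟩ ⟨⟨T, hT⟩, s⟩ h
    simp only at h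
    have hST : S = T := by
      have h1 := topSet_glue ⟨S, hS⟩ r
      have h2 := topSet_glue ⟨T, hT⟩ s
      exact h1.symm.trans (by rw [h]; exact h2)
    subst hST
    refine Sigma.ext rfl (heq_of_eq ?_)
    apply Subtype.ext
    funext x y
    apply propext
    have h2 : (glue ⟨S, hS⟩ r).1 x.1 y.1 = (glue ⟨S, hT⟩ s).1 x.1 y.1 :=
      congrFun (congrFun (congrArg Subtype.val h) _) _
    have e1 : (glue ⟨S, hS⟩ r).1 x.1 y.1 ↔ r.1 x y := glue_apply_not_mem x.2 y.2
    have e2 : (glue ⟨S, hT⟩ s).1 x.1 y.1 ↔ s.1 x y := glue_apply_not_mem x.2 y.2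
    rw [← e1, ← e2, h2]
  · intro r
    exact ⟨⟨⟨topSet r, topSet_nonempty r⟩,
      ⟨fun x y => r.1 x.1 y.1, fun x => r.2.1 _, fun _ _ _ h h' => r.2.2.1 h h',
        fun x y => r.2.2.2 _ _⟩⟩, glue_restrict r⟩

end Decomp

theorem nat_card_sigma {ι : Type*} [Fintype ι] (f : ι → Type*) [∀ i, Finite (f i)] :
    Nat.card (Σ i, f i) = ∑ i, Nat.card (f i) := by
  classical
  letI : ∀ i, Fintype (f i) := fun i => Fintype.ofFinite (f i)
  simp [Nat.card_eq_fintype_card]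

open Finset in
theorem two_mul_W (n : ℕ) (hn : 0 < n) :
    2 * W n = ∑ k ∈ Finset.range (n + 1), n.choose k * W (n - k) := by
  classical
  haveI : Nonempty (Fin n) := ⟨⟨0, hn⟩⟩
  have h0 : W n = Nat.card (TP (Fin n)) := by
    rw [card_TP, Fintype.card_fin]
  have h1 : Nat.card (TP (Fin n)) =
      ∑ S : {S : Finset (Fin n) // S.Nonempty}, Nat.card (TP {x : Fin n // x ∉ S.1}) := by
    rw [← nat_card_sigma]
    exact Nat.card_congr (decompEquiv (α := Fin n)).symm
  have h2 : ∀ S : {S : Finset (Fin n) // S.Nonempty},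
      Nat.card (TP {x : Fin n // x ∉ S.1}) = W (n - S.1.card) := by
    intro S
    rw [card_TP]
    congr 1
    simp [Fintype.card_subtype_compl, Fintype.card_fin]
  -- sum over nonempty finsets
  have h3 : W n = ∑ S ∈ Finset.univ.filter (fun S : Finset (Fin n) => S.Nonempty),
      W (n - S.card) := by
    rw [h0, h1]
    rw [Finset.sum_subtype (p := fun S : Finset (Fin n) => S.Nonempty)
      (Finset.univ.filter (fun S : Finset (Fin n) => S.Nonempty))
      (by simp) (fun S => W (n - S.card))]
    exact Finset.sum_congr rfl fun S _ => h2 S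
  have h4 : ∑ S ∈ (Finset.univ : Finset (Finset (Fin n))), W (n - S.card)
      = W n + ∑ S ∈ Finset.univ.filter (fun S : Finset (Fin n) => S.Nonempty),
          W (n - S.card) := by
    rw [← Finset.sum_filter_add_sum_filter_not Finset.univ
      (fun S : Finset (Fin n) => S.Nonempty) (fun S => W (n - S.card))]
    rw [add_comm]
    congr 1
    have : Finset.univ.filter (fun S : Finset (Fin n) => ¬S.Nonempty) = {∅} := by
      ext S
      simp [Finset.not_nonempty_iff_eq_empty]
    rw [this, Finset.sum_singleton]
    simp
  have h5 : ∑ S ∈ (Finset.univ : Finset (Finset (Fin n))), W (n - S.card)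
      = ∑ k ∈ Finset.range (n + 1), n.choose k * W (n - k) := by
    rw [← Finset.powerset_univ, Finset.powerset_card_disjiUnion]
    refine (Finset.sum_disjiUnion _ _ _).trans ?_
    refine Finset.sum_congr (by simp) fun k hk => ?_
    rw [Finset.sum_congr rfl (fun S hS => by
      rw [(Finset.mem_powersetCard.mp hS).2]), Finset.sum_const, Finset.card_powersetCard]
    simp [mul_comm]
  omega

/-- The exponential generating function of the numbers `W n` of total preorders on `Fin n`
is `1 / (2 - e^x)`: as formal power series over `ℚ`, `(2 - exp) * ∑ (W n / n!) Xⁿ = 1`. -/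
theorem totalPreorders_egf :
    (2 - PowerSeries.exp ℚ) * PowerSeries.mk (fun n => (W n : ℚ) / n.factorial) = 1 := by
  ext n
  rw [PowerSeries.coeff_mul, PowerSeries.coeff_one,
    Finset.Nat.sum_antidiagonal_eq_sum_range_succ_mk]
  have hc : ∀ k : ℕ, (PowerSeries.coeff (R := ℚ) k) (2 - PowerSeries.exp ℚ)
      = (if k = 0 then 2 else 0) - 1 / k.factorial := by
    intro k
    rw [map_sub, PowerSeries.coeff_exp,
      show (2 : PowerSeries ℚ) = PowerSeries.C (R := ℚ) 2 from (map_ofNat (PowerSeries.C (R := ℚ)) 2).symm,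
      PowerSeries.coeff_C]
    simp
  simp only [hc, PowerSeries.coeff_mk, sub_mul, Finset.sum_sub_distrib]
  have hfirst : ∑ k ∈ Finset.range (n + 1),
      (if k = 0 then (2:ℚ) else 0) * ((W (n - k) : ℚ) / (n - k).factorial)
      = 2 * ((W n : ℚ) / n.factorial) := by
    rw [Finset.sum_eq_single 0]
    · simp
    · intro k _ hk; simp [hk]
    · intro h; simp at h
  rw [hfirst]
  rcases Nat.eq_zero_or_pos n with rfl | hn
  · simp [W_zero]
    norm_num
  · have hne : ¬ n = 0 := hn.ne'
    simp only [hne, if_false]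
    have key : (2 * W n : ℚ) = ∑ k ∈ Finset.range (n + 1), (n.choose k : ℚ) * W (n - k) := by
      exact_mod_cast two_mul_W n hn
    have hterm : ∀ k ∈ Finset.range (n + 1),
        (1 / (k.factorial : ℚ)) * ((W (n - k) : ℚ) / (n - k).factorial)
        = (n.choose k : ℚ) * W (n - k) / n.factorial := by
      intro k hk
      have hkn : k ≤ n := Nat.lt_succ_iff.mp (Finset.mem_range.mp hk)
      have hfact : (n.choose k : ℚ) * k.factorial * (n - k).factorial = n.factorial := by
        exact_mod_cast Nat.choose_mul_factorial_mul_factorial hkn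
      have h1 : (k.factorial : ℚ) ≠ 0 := Nat.cast_ne_zero.mpr k.factorial_ne_zero
      have h2 : ((n - k).factorial : ℚ) ≠ 0 := Nat.cast_ne_zero.mpr (n - k).factorial_ne_zero
      have h3 : (n.factorial : ℚ) ≠ 0 := Nat.cast_ne_zero.mpr n.factorial_ne_zero
      field_simp
      linear_combination (-(W (n - k) : ℚ)) * hfact
    rw [Finset.sum_congr rfl hterm, ← Finset.sum_div, ← key]
    ring
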